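/- Let Φ be a countable set of pairs (m,n) with n > m > 1 and let (W,R,r) be a Φ-frame rooted at r with W countable. Then there exist a pointed frame (W',R',r') rooted at r' and a pointed p-morphism f : (W',R',r') → (W,R,r) such that: (i) ∀x,y (x R' y → ∃y' (x R' y' ∧ d_{r'}(y') = d_{r'}(x)+1 ∧ f(y') = f(y))); and (ii) for each (m,n) ∈ Φ, ∀x,z (x R'^m z → ∃ w_1,…,w_{n−1} ∈ W' with x R' w_1 R' ⋯ R' w_{n−1} R' z and d_{r'}(w_j) = d_{r'}(x)+j for each j). -/

import Mathlib

/-- Modal formulas: ⊥, propositional variables, ¬, ∨, ◇. -/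
inductive ModalFormula : Type
  | bot : ModalFormula
  | var : ℕ → ModalFormula
  | neg : ModalFormula → ModalFormula
  | or : ModalFormula → ModalFormula → ModalFormula
  | dia : ModalFormula → ModalFormula

namespace ModalFormula

/-- Modal depth: maximal nesting of ◇. -/
def md : ModalFormula → ℕ
  | bot => 0
  | var _ => 0
  | neg φ => md φ
  | or φ ψ => max (md φ) (md ψ)
  | dia φ => md φ + 1

/-- The set of propositional variables occurring in a formula. -/
def vars : ModalFormula → Set ℕ
  | bot => ∅
  | var p => {p}
  | neg φ => vars φ
  | or φ ψ => vars φ ∪ vars ψ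
  | dia φ => vars φ

/-- The set of subformulas of a formula (including the formula itself). -/
def subformulas : ModalFormula → Set ModalFormula
  | bot => {bot}
  | var p => {var p}
  | neg φ => insert (neg φ) (subformulas φ)
  | or φ ψ => insert (or φ ψ) (subformulas φ ∪ subformulas ψ)
  | dia φ => insert (dia φ) (subformulas φ)

end ModalFormula

/-- Standard Kripke satisfaction for a model given by a relation `R` and a valuation `V`. -/
def Sat {W : Type*} (R : W → W → Prop) (V : ℕ → Set W) : W → ModalFormula → Prop
  | _, .bot => False
  | w, .var p => w ∈ V p
  | w, .neg φ => ¬ Sat R V w φ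
  | w, .or φ ψ => Sat R V w φ ∨ Sat R V w ψ
  | w, .dia φ => ∃ v, R w v ∧ Sat R V v φ

/-- The `k`-step relation: `relPow R 0` is the identity, `relPow R (k+1) = relPow R k ∘ R`. -/
def relPow {W : Type*} (R : W → W → Prop) : ℕ → W → W → Prop
  | 0, x, y => x = y
  | k + 1, x, y => ∃ u, relPow R k x u ∧ R u y

/-- A frame is a `Φ`-frame if for every `(m,n) ∈ Φ`, `x R^m y` implies `x R^n y`. -/
def PhiFrame {W : Type*} (R : W → W → Prop) (Φ : Set (ℕ × ℕ)) : Prop :=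
  ∀ mn ∈ Φ, ∀ x y : W, relPow R mn.1 x y → relPow R mn.2 x y

/-- A pointed frame is rooted at `r` if every world is reachable from `r` in some number of steps. -/
def Rooted {W : Type*} (R : W → W → Prop) (r : W) : Prop :=
  ∀ w : W, ∃ k, relPow R k r w

/-- The depth of `w` w.r.t. `r`: the least `k` with `r R^k w`. -/
noncomputable def depth {W : Type*} (R : W → W → Prop) (r w : W) : ℕ :=
  sInf {k | relPow R k r w}

/-- `f` is a pointed p-morphism from `(W',R',r')` to `(W,R,r)`. -/
def IsPMorphism {W' W : Type*} (R' : W' → W' → Prop) (r' : W')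
    (R : W → W → Prop) (r : W) (f : W' → W) : Prop :=
  f r' = r ∧ (∀ x y, R' x y → R (f x) (f y)) ∧
    (∀ x y', R (f x) y' → ∃ y, R' x y ∧ f y = y')

/-- Bisimilarity of `x` (in model `(R,V)`) and `x'` (in model `(R',V')`). -/
def Bisim {W W' : Type*} (R : W → W → Prop) (V : ℕ → Set W)
    (R' : W' → W' → Prop) (V' : ℕ → Set W') (x : W) (x' : W') : Prop :=
  ∃ Z : W → W' → Prop, Z x x' ∧ ∀ w w', Z w w' →
    (∀ p, w ∈ V p ↔ w' ∈ V' p) ∧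
    (∀ v, R w v → ∃ v', R' w' v' ∧ Z v v') ∧
    (∀ v', R' w' v' → ∃ v, R w v ∧ Z v v')

/-- `k`-bisimilarity w.r.t. the set `X` of propositional variables. -/
def kBisim {W W' : Type*} (R : W → W → Prop) (V : ℕ → Set W)
    (R' : W' → W' → Prop) (V' : ℕ → Set W') (X : Set ℕ) :
    ℕ → W → W' → Prop
  | 0, w, w' => ∀ p ∈ X, (w ∈ V p ↔ w' ∈ V' p)
  | k + 1, w, w' => (∀ p ∈ X, (w ∈ V p ↔ w' ∈ V' p)) ∧
      (∀ v, R w v → ∃ v', R' w' v' ∧ kBisim R V R' V' X k v v') ∧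
      (∀ v', R' w' v' → ∃ v, R w v ∧ kBisim R V R' V' X k v v')

/-- `DepthPath R dep n x z` says there is an `n`-step `R`-path
`x R w₁ R ⋯ R w_{n-1} R z` whose intermediate points satisfy `dep (w_j) = dep x + j`. -/
def DepthPath {W : Type*} (R : W → W → Prop) (dep : W → ℕ) (n : ℕ) (x z : W) : Prop :=
  ∃ w : ℕ → W, w 0 = x ∧ w n = z ∧ (∀ j < n, R (w j) (w (j + 1))) ∧
    ∀ j, 0 < j → j < n → dep (w j) = dep x + j

lemma relPow_add {W : Type*} {R : W → W → Prop} {k j : ℕ} {x y z : W}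
    (h1 : relPow R k x y) (h2 : relPow R j y z) : relPow R (k + j) x z := by
  induction j generalizing z with
  | zero => exact (show y = z from h2) ▸ h1
  | succ j ih => obtain ⟨u, hu, huz⟩ := h2; exact ⟨u, ih hu, huz⟩

lemma relPow_of_path {W : Type*} {R : W → W → Prop} (u : ℕ → W) (k : ℕ)
    (h : ∀ i < k, R (u i) (u (i + 1))) : relPow R k (u 0) (u k) := by
  induction k with
  | zero => rfl
  | succ k ih => exact ⟨u k, ih (fun i hi => h i (by omega)), h k (by omega)⟩

lemma path_of_relPow {W : Type*} {R : W → W → Prop} {k : ℕ} {x y : W}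
    (h : relPow R k x y) :
    ∃ u : ℕ → W, u 0 = x ∧ u k = y ∧ ∀ i < k, R (u i) (u (i + 1)) := by
  induction k generalizing y with
  | zero => exact ⟨fun _ => x, rfl, (show x = y from h), fun i hi => absurd hi (by omega)⟩
  | succ k ih =>
    obtain ⟨v, hv, hvy⟩ := h
    obtain ⟨u, h0, hk, hs⟩ := ih hv
    refine ⟨fun i => if i ≤ k then u i else y, by simpa using h0, by simp, ?_⟩
    intro i hi
    rcases Nat.lt_or_ge i k with hik | hik
    · simpa [hik.le, Nat.succ_le_of_lt hik] using hs i hik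
    · have : i = k := by omega
      subst this
      simpa [hk] using hvy


/-- For any countable rooted `Φ`-frame (`Φ` countable) there is a rooted pointed frame
and a pointed p-morphism onto it satisfying conditions (i) and (ii). -/
theorem statement6 (Φ : Set (ℕ × ℕ)) (hΦ : ∀ mn ∈ Φ, 1 < mn.1 ∧ mn.1 < mn.2)
    (hΦc : Φ.Countable) {W : Type*} [Countable W]
    (R : W → W → Prop) (r : W) (hFrame : PhiFrame R Φ) (hRoot : Rooted R r) :
    ∃ (W' : Type) (R' : W' → W' → Prop) (r' : W') (f : W' → W),
      Rooted R' r' ∧ IsPMorphism R' r' R r f ∧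
      (∀ x y, R' x y → ∃ y', R' x y' ∧ depth R' r' y' = depth R' r' x + 1 ∧ f y' = f y) ∧
      (∀ mn ∈ Φ, ∀ x z, relPow R' mn.1 x z → DepthPath R' (depth R' r') mn.2 x z) := by
  classical
  have hne : Nonempty W := ⟨r⟩
  obtain ⟨g, hg⟩ := exists_surjective_nat W
  obtain ⟨a₀, ha₀⟩ := hg r
  let W' : Type := {p : ℕ × ℕ // relPow R p.2 r (g p.1) ∧ (p.2 = 0 → p.1 = a₀)}
  let R' : W' → W' → Prop := fun a b => R (g a.1.1) (g b.1.1) ∧ b.1.2 ≤ a.1.2 + 1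
  let r' : W' := ⟨(a₀, 0), show r = g a₀ from ha₀.symm, fun _ => rfl⟩
  let f : W' → W := fun p => g p.1.1
  -- counter grows by at most 1 each step
  have hcnt : ∀ j (x y : W'), relPow R' j x y → y.1.2 ≤ x.1.2 + j := by
    intro j
    induction j with
    | zero =>
      intro x y h
      rw [show x = y from h]
      omega
    | succ j ih =>
      rintro x y ⟨u, hu, hedge⟩
      have h1 := ih x u hu
      have h2 := hedge.2
      omega
  -- projection of relPow
  have hproj : ∀ j (x y : W'), relPow R' j x y → relPow R j (f x) (f y) := by
    intro j
    induction j with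
    | zero => intro x y h; exact congrArg f (show x = y from h)
    | succ j ih => rintro x y ⟨u, hu, hedge⟩; exact ⟨f u, ih x u hu, hedge.1⟩
  -- every element is reachable in exactly its counter number of steps
  have hreach : ∀ k (x : W'), x.1.2 = k → relPow R' k r' x := by
    intro k
    induction k with
    | zero =>
      intro x hk
      have h1 : x.1.1 = a₀ := x.2.2 hk
      have : x = r' := Subtype.ext (Prod.ext h1 hk)
      exact this.symm
    | succ k ih =>
      intro x hk
      have hx : relPow R (k + 1) r (g x.1.1) := by
        have := x.2.1; rwa [hk] at this
      obtain ⟨v, hv, hva⟩ := hx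
      obtain ⟨b, hb, hb0⟩ : ∃ b, g b = v ∧ (k = 0 → b = a₀) := by
        rcases Nat.eq_zero_or_pos k with h | h
        · subst h
          exact ⟨a₀, ha₀.trans (show r = v from hv), fun _ => rfl⟩
        · obtain ⟨b, hb⟩ := hg v
          exact ⟨b, hb, fun h0 => absurd h0 (by omega)⟩
      refine ⟨⟨(b, k), hb.symm ▸ hv, hb0⟩, ih _ rfl, ?_, by simp [hk]⟩
      show R (g b) (g x.1.1)
      rw [hb]; exact hva
  -- depth equals the counter
  have hdepth : ∀ x : W', depth R' r' x = x.1.2 := by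
    intro x
    have hmem : x.1.2 ∈ {k | relPow R' k r' x} := hreach _ x rfl
    refine le_antisymm (Nat.sInf_le hmem) ?_
    have h2 : sInf {k | relPow R' k r' x} ∈ {k | relPow R' k r' x} :=
      Nat.sInf_mem ⟨_, hmem⟩
    have h3 := hcnt _ r' x h2
    simpa [depth, r'] using h3
  refine ⟨W', R', r', f, ?_, ⟨ha₀, fun x y h => h.1, ?_⟩, ?_, ?_⟩
  · -- Rooted
    exact fun x => ⟨x.1.2, hreach _ x rfl⟩
  · -- back condition
    intro x y' hy'
    obtain ⟨b, hb⟩ := hg y'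
    refine ⟨⟨(b, x.1.2 + 1), ⟨g x.1.1, x.2.1, hb.symm ▸ hy'⟩, by omega⟩,
      ⟨hb.symm ▸ hy', le_refl _⟩, hb⟩
  · -- condition (i)
    intro x y hxy
    refine ⟨⟨(y.1.1, x.1.2 + 1), ⟨g x.1.1, x.2.1, hxy.1⟩, by omega⟩,
      ⟨hxy.1, le_refl _⟩, ?_, rfl⟩
    rw [hdepth, hdepth]
  · -- condition (ii)
    intro mn hmn x z hxz
    obtain ⟨hm1, hmlt⟩ := hΦ mn hmn
    set m := mn.1 with hm
    set n := mn.2 with hn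
    have hRm : relPow R m (f x) (f z) := hproj m x z hxz
    have hRn : relPow R n (f x) (f z) := hFrame mn hmn _ _ hRm
    obtain ⟨u, hu0, hun, hstep⟩ := path_of_relPow hRn
    have hzcnt : z.1.2 ≤ x.1.2 + m := hcnt m x z hxz
    have humem : ∀ j ≤ n, relPow R (x.1.2 + j) r (u j) := by
      intro j hj
      have h1 : relPow R j (u 0) (u j) := relPow_of_path u j (fun i hi => hstep i (by omega))
      exact relPow_add (by rw [hu0]; exact x.2.1) h1
    choose b hb using fun j => hg (u j)
    let w : ℕ → W' := fun j =>
      if hj0 : j = 0 then x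
      else if hj : j < n then
        ⟨(b j, x.1.2 + j), (hb j).symm ▸ humem j hj.le, by omega⟩
      else z
    have hw0 : w 0 = x := by simp [w]
    have hwn : w n = z := by
      have hn0 : n ≠ 0 := by omega
      simp [w, hn0]
    have hwmid : ∀ j, 0 < j → j < n → (w j).1 = (b j, x.1.2 + j) := by
      intro j hj0 hjn
      simp only [w]
      rw [dif_neg (by omega : ¬ j = 0), dif_pos hjn]
    refine ⟨w, hw0, hwn, ?_, ?_⟩
    · intro j hj
      rcases Nat.eq_zero_or_pos j with hj0 | hj0
      · subst hj0
        have h1 : (w 1).1 = (b 1, x.1.2 + 1) := hwmid 1 one_pos (by omega)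
        rw [hw0]
        constructor
        · show R (f x) (g (w 1).1.1)
          rw [show (w 1).1.1 = b 1 from by rw [h1], hb 1, ← hu0]
          exact hstep 0 (by omega)
        · rw [show (w 1).1.2 = x.1.2 + 1 from by rw [h1]]
      · rcases Nat.lt_or_ge (j + 1) n with hj1 | hj1
        · have h1 := hwmid j hj0 (by omega)
          have h2 := hwmid (j + 1) (by omega) hj1
          constructor
          · show R (g (w j).1.1) (g (w (j+1)).1.1)
            rw [show (w j).1.1 = b j from by rw [h1],
              show (w (j+1)).1.1 = b (j+1) from by rw [h2], hb j, hb (j+1)]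
            exact hstep j hj
          · rw [show (w (j+1)).1.2 = x.1.2 + (j+1) from by rw [h2],
              show (w j).1.2 = x.1.2 + j from by rw [h1]]
            omega
        · have hjn : j + 1 = n := by omega
          have h1 := hwmid j hj0 hj
          have h2 : w (j + 1) = z := by rw [hjn, hwn]
          constructor
          · show R (g (w j).1.1) (g (w (j+1)).1.1)
            rw [show (w j).1.1 = b j from by rw [h1], h2, hb j,
              show g z.1.1 = u n from hun.symm, ← hjn]
            exact hstep j hj
          · rw [h2, show (w j).1.2 = x.1.2 + j from by rw [h1]]
            omega
    · intro j hj0 hjn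
      rw [hdepth, hdepth, show (w j).1.2 = x.1.2 + j from by rw [hwmid j hj0 hjn]]
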